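/- Let W ⊆ ℂ^m be a ℂ-linear subspace and let z ∈ (ℂˣ)^m. Define ℝ-linear maps P, Q : W → ℝ^m by P(w) = (Re(w_1/z_1), …, Re(w_m/z_m)) and Q(w) = (Im(w_1/z_1), …, Im(w_m/z_m)) (these are the differentials at z of Log and of Arg, restricted to W). Then multiplication by √−1 maps the kernel of Q (which is W ∩ z·ℝ^m = {w ∈ W : w_j/z_j ∈ ℝ for all j}) ℝ-linearly isomorphically onto the kernel of P, and consequently P and Q have equal ℝ-rank. (This is the key step of Proposition 1.1: the amoeba and coamoeba of a subvariety of (ℂˣ)^m have the same dimension.) -/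
import Mathlib

set_option maxHeartbeats 1000000
set_option synthInstance.maxHeartbeats 400000


/-- Let `W ⊆ ℂ^m` be a ℂ-linear subspace and `z ∈ (ℂˣ)^m`.  Let
`P Q : W → ℝ^m` be the ℝ-linear maps `P w = (Re(w_i/z_i))_i` and `Q w = (Im(w_i/z_i))_i`
(the differentials at `z` of `Log` and `Arg` restricted to `W`).  Then the kernel of `Q`
is `{w ∈ W : w_j/z_j ∈ ℝ for all j}`, multiplication by `√-1` maps `ker Q` ℝ-linearly
isomorphically onto `ker P`, and consequently `P` and `Q` have equal ℝ-rank. -/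
theorem stmt0 {m : ℕ} (W : Submodule ℂ (Fin m → ℂ)) (z : Fin m → ℂ)
    (hz : ∀ i, z i ≠ 0)
    (P Q : W →ₗ[ℝ] (Fin m → ℝ))
    (hP : ∀ w : W, ∀ i, P w i = ((w : Fin m → ℂ) i / z i).re)
    (hQ : ∀ w : W, ∀ i, Q w i = ((w : Fin m → ℂ) i / z i).im) :
    (∀ w : W, w ∈ LinearMap.ker Q ↔ ∀ j, ∃ r : ℝ, (w : Fin m → ℂ) j / z j = (r : ℂ)) ∧
    (∃ e : LinearMap.ker Q ≃ₗ[ℝ] LinearMap.ker P,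
      ∀ x : LinearMap.ker Q,
        (((e x : W) : Fin m → ℂ)) = Complex.I • (((x : W) : Fin m → ℂ))) ∧
    LinearMap.rank P = LinearMap.rank Q := by
  have hkerQ : ∀ w : W, w ∈ LinearMap.ker Q ↔
      ∀ j, ∃ r : ℝ, (w : Fin m → ℂ) j / z j = (r : ℂ) := by
    intro w
    constructor
    · intro hw j
      refine ⟨((w : Fin m → ℂ) j / z j).re, ?_⟩
      have h0 : Q w j = 0 := by
        have := LinearMap.mem_ker.mp hw
        simp [this]
      rw [hQ w j] at h0
      exact Complex.ext rfl (by simpa using h0)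
    · intro h
      apply LinearMap.mem_ker.mpr
      funext j
      obtain ⟨r, hr⟩ := h j
      rw [hQ w j, hr]
      simp
  -- multiplication by I on W
  have hmemI : ∀ w : W, Complex.I • (w : Fin m → ℂ) ∈ W := fun w => W.smul_mem _ w.2
  -- key computations
  have hPI : ∀ (w : W) (h : Complex.I • (w : Fin m → ℂ) ∈ W) (i : Fin m),
      P ⟨_, h⟩ i = - Q w i := by
    intro w h i
    rw [hP, hQ]
    show ((Complex.I • (w : Fin m → ℂ)) i / z i).re = _
    simp [Pi.smul_apply, mul_div_assoc]
  have hQI : ∀ (w : W) (h : (-Complex.I) • (w : Fin m → ℂ) ∈ W) (i : Fin m),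
      Q ⟨_, h⟩ i = - P w i := by
    intro w h i
    rw [hQ, hP]
    show (((-Complex.I) • (w : Fin m → ℂ)) i / z i).im = _
    simp [Pi.smul_apply, neg_div, mul_div_assoc]
  -- forward linear map
  let f : LinearMap.ker Q →ₗ[ℝ] LinearMap.ker P :=
    { toFun := fun x => ⟨⟨Complex.I • ((x : W) : Fin m → ℂ), hmemI _⟩, by
        apply LinearMap.mem_ker.mpr
        funext i
        have := hPI (x : W) (hmemI _) i
        rw [Pi.zero_apply, this]
        have hx := LinearMap.mem_ker.mp x.2
        simp [hx]⟩
      map_add' := by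
        intro x y
        ext i
        simp [smul_add, mul_add]
      map_smul' := by
        intro c x
        ext i
        simp [Complex.real_smul]
        ring }
  let g : LinearMap.ker P →ₗ[ℝ] LinearMap.ker Q :=
    { toFun := fun x => ⟨⟨(-Complex.I) • ((x : W) : Fin m → ℂ), W.smul_mem _ (x : W).2⟩, by
        apply LinearMap.mem_ker.mpr
        funext i
        have := hQI (x : W) (W.smul_mem _ (x : W).2) i
        rw [Pi.zero_apply, this]
        have hx := LinearMap.mem_ker.mp x.2
        simp [hx]⟩
      map_add' := by
        intro x y
        ext i
        simp [smul_add, mul_add]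
      map_smul' := by
        intro c x
        ext i
        simp [Complex.real_smul]
        ring }
  have hfg : ∀ y : LinearMap.ker P, f (g y) = y := by
    intro y
    ext i
    show (Complex.I • ((-Complex.I) • ((y : W) : Fin m → ℂ))) i = _
    rw [smul_smul]
    simp
  have hgf : ∀ x : LinearMap.ker Q, g (f x) = x := by
    intro x
    ext i
    show ((-Complex.I) • (Complex.I • ((x : W) : Fin m → ℂ))) i = _
    rw [smul_smul]
    simp
  let e : LinearMap.ker Q ≃ₗ[ℝ] LinearMap.ker P :=
    { toLinearMap := f
      invFun := g
      left_inv := hgf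
      right_inv := hfg }
  refine ⟨hkerQ, ⟨e, fun x => rfl⟩, ?_⟩
  -- rank equality
  have : FiniteDimensional ℝ W := Module.Finite.trans ℂ W
  have hkr : Module.finrank ℝ (LinearMap.ker Q) = Module.finrank ℝ (LinearMap.ker P) :=
    e.finrank_eq
  have h1 := LinearMap.finrank_range_add_finrank_ker P
  have h2 := LinearMap.finrank_range_add_finrank_ker Q
  have hr : Module.finrank ℝ (LinearMap.range P) = Module.finrank ℝ (LinearMap.range Q) := by
    omega
  show Module.rank ℝ (LinearMap.range P) = Module.rank ℝ (LinearMap.range Q)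
  rw [← Module.finrank_eq_rank, ← Module.finrank_eq_rank, hr]
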